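/- Let G : ℝ^m → ℝ be μ-strongly convex (μ > 0) and L-smooth (L ≥ μ), and let S be a real m×m symmetric positive semidefinite matrix. Define F : ℝ^m → ℝ by F(y) = sup_{λ∈ℝ^m} (−G(λ) − ⟨y, Sλ⟩). Then F is (λmax(S)²/μ)-smooth, and F is (λ⁺min(S²)/L)-strongly convex on the subspace Range(S): for all y, y' ∈ Range(S), ⟨∇F(y) − ∇F(y'), y − y'⟩ ≥ (λ⁺min(S²)/L)‖y − y'‖². -/

import Mathlib

open scoped RealInnerProductSpace
open Matrix Asymptotics

/-- The largest eigenvalue of a (positive semidefinite symmetric) matrix, as the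
operator norm of the induced linear map between Euclidean spaces. -/
noncomputable def lambdaMax {m : ℕ} (M : Matrix (Fin m) (Fin m) ℝ) : ℝ :=
  ‖LinearMap.toContinuousLinearMap (Matrix.toEuclideanLin M)‖

/-- The smallest nonzero (i.e. positive) eigenvalue of a positive semidefinite matrix. -/
noncomputable def posMinEig {m : ℕ} (M : Matrix (Fin m) (Fin m) ℝ) : ℝ :=
  sInf {t : ℝ | 0 < t ∧ ∃ v : EuclideanSpace ℝ (Fin m), v ≠ 0 ∧
    Matrix.toEuclideanLin M v = t • v}

section Aux
variable {m : ℕ}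
local notation "E" => EuclideanSpace ℝ (Fin m)

lemma line_deriv {f : E → ℝ} (hd : Differentiable ℝ f) (x d : E) (t : ℝ) :
    HasDerivAt (fun s : ℝ => f (x + s • d)) ⟪gradient f (x + t • d), d⟫ t := by
  have h1 : HasFDerivAt f ((InnerProductSpace.toDual ℝ E) (gradient f (x + t • d))) (x + t • d) :=
    (hd _).hasGradientAt
  have h2 : HasDerivAt (fun s : ℝ => x + s • d) d t := by
    simpa using ((hasDerivAt_id t).smul_const d).const_add x
  have h3 := h1.comp_hasDerivAt t h2
  exact h3

lemma grad_ineq {f : E → ℝ} (hf : ConvexOn ℝ Set.univ f) (hd : Differentiable ℝ f)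
    (x y : E) : f x + ⟪gradient f x, y - x⟫ ≤ f y := by
  have hg : ConvexOn ℝ Set.univ (fun s : ℝ => f (x + s • (y - x))) := by
    have := hf.comp_affineMap (AffineMap.lineMap x y : ℝ →ᵃ[ℝ] E)
    have he : ∀ s : ℝ, (AffineMap.lineMap x y : ℝ →ᵃ[ℝ] E) s = x + s • (y - x) := by
      intro s; simp [AffineMap.lineMap_apply]; module
    simpa [Function.comp_def, he] using this
  have hD := line_deriv hd x (y - x) 0
  simp only [zero_smul, add_zero] at hD
  have h := hg.le_slope_of_hasDerivAt (Set.mem_univ (0:ℝ)) (Set.mem_univ (1:ℝ)) one_pos hD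
  rw [slope_def_field] at h
  simp only [one_smul, zero_smul, add_zero, add_sub_cancel] at h
  have h2 : (f y - f x) / (1 - 0) = f y - f x := by norm_num
  rw [h2] at h
  linarith

lemma mono_grad {f : E → ℝ} (hf : ConvexOn ℝ Set.univ f) (hd : Differentiable ℝ f)
    (x y : E) : 0 ≤ ⟪gradient f x - gradient f y, x - y⟫ := by
  have h1 := grad_ineq hf hd x y
  have h2 := grad_ineq hf hd y x
  have e : ⟪gradient f x - gradient f y, x - y⟫
      = -⟪gradient f x, y - x⟫ - ⟪gradient f y, x - y⟫ := by
    rw [inner_sub_left]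
    have hyx : (y - x) = -(x - y) := by abel
    rw [hyx, inner_neg_right]; ring
  rw [e]; linarith

lemma convex_of_mono {f : E → ℝ} (hd : Differentiable ℝ f)
    (h : ∀ u v : E, 0 ≤ ⟪gradient f u - gradient f v, u - v⟫) :
    ConvexOn ℝ Set.univ f := by
  refine ⟨convex_univ, ?_⟩
  intro x _ y _ a b ha hb hab
  have hgd : Differentiable ℝ (fun s : ℝ => f (x + s • (y - x))) :=
    fun t => (line_deriv hd x (y - x) t).differentiableAt
  have hg : ConvexOn ℝ Set.univ (fun s : ℝ => f (x + s • (y - x))) := by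
    have hmono : Monotone (deriv (fun s : ℝ => f (x + s • (y - x)))) := by
      have hder : ∀ t : ℝ, deriv (fun s : ℝ => f (x + s • (y - x))) t
          = ⟪gradient f (x + t • (y - x)), y - x⟫ := fun t => (line_deriv hd x _ t).deriv
      intro s t hst
      rcases eq_or_lt_of_le hst with rfl | hlt
      · exact le_rfl
      rw [hder, hder]
      have hm := h (x + t • (y - x)) (x + s • (y - x))
      have he : (x + t • (y - x)) - (x + s • (y - x)) = (t - s) • (y - x) := by module
      rw [he, real_inner_smul_right, inner_sub_left] at hm
      nlinarith [hm]
    exact hmono.convexOn_univ_of_deriv hgd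
  have hkey := hg.2 (Set.mem_univ (0:ℝ)) (Set.mem_univ (1:ℝ)) ha hb hab
  have ha' : a = 1 - b := by linarith
  subst ha'
  have e1 : (1 - b) * (0:ℝ) + b * 1 = b := by ring
  simp only [smul_eq_mul, e1] at hkey
  have e2 : x + (b:ℝ) • (y - x) = (1 - b) • x + b • y := by module
  have e3 : x + (0:ℝ) • (y - x) = x := by module
  have e4 : x + (1:ℝ) • (y - x) = y := by module
  rw [e2, e3, e4] at hkey
  exact hkey

lemma hasGradientAt_of_quad {f : E → ℝ} {g x : E} {K : ℝ}
    (hb : ∀ y, |f y - f x - ⟪g, y - x⟫| ≤ K * ‖y - x‖ ^ 2) :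
    HasGradientAt f g x := by
  rw [hasGradientAt_iff_isLittleO]
  have h1 : (fun y => f y - f x - ⟪g, y - x⟫) =O[nhds x] (fun y => ‖y - x‖ ^ 2) :=
    IsBigO.of_bound K (Filter.Eventually.of_forall fun y => by
      simpa [abs_of_nonneg (sq_nonneg (‖y - x‖))] using hb y)
  refine h1.trans_isLittleO ?_
  rw [isLittleO_iff]
  intro c hc
  rw [Metric.eventually_nhds_iff]
  refine ⟨c, hc, fun y hy => ?_⟩
  have h2 : ‖y - x‖ < c := by rwa [dist_eq_norm] at hy
  have h3 : (0:ℝ) ≤ ‖y - x‖ := norm_nonneg _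
  simp only [norm_pow, norm_norm]
  nlinarith

lemma grad_normsq (c : ℝ) (x : E) :
    HasGradientAt (fun z : E => c * ‖z‖ ^ 2) ((2 * c) • x) x := by
  apply hasGradientAt_of_quad (K := |c|)
  intro y
  have h1 : ‖y‖ ^ 2 = ‖x‖ ^ 2 + 2 * ⟪x, y - x⟫ + ‖y - x‖ ^ 2 := by
    have := norm_add_sq_real x (y - x)
    simpa using this
  have h2 : ⟪(2 * c) • x, y - x⟫ = 2 * c * ⟪x, y - x⟫ := real_inner_smul_left _ _ _
  rw [h2, h1]
  have : c * (‖x‖ ^ 2 + 2 * ⟪x, y - x⟫ + ‖y - x‖ ^ 2) - c * ‖x‖ ^ 2 - 2 * c * ⟪x, y - x⟫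
      = c * ‖y - x‖ ^ 2 := by ring
  rw [this, abs_mul, abs_of_nonneg (sq_nonneg ‖y - x‖)]

lemma HasGradientAt.sub'' {f h : E → ℝ} {gf gh x : E} (Hf : HasGradientAt f gf x)
    (Hh : HasGradientAt h gh x) : HasGradientAt (fun z => f z - h z) (gf - gh) x := by
  rw [hasGradientAt_iff_hasFDerivAt] at *
  rw [map_sub]
  exact Hf.sub Hh


lemma strong_mono {μ : ℝ} {G : E → ℝ} (hG : ConvexOn ℝ Set.univ (fun lam => G lam - μ / 2 * ‖lam‖ ^ 2))
    (hGd : Differentiable ℝ G) (u v : E) :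
    μ * ‖u - v‖ ^ 2 ≤ ⟪gradient G u - gradient G v, u - v⟫ := by
  have hkd : Differentiable ℝ (fun lam : E => G lam - μ / 2 * ‖lam‖ ^ 2) := hGd.sub (fun z => (grad_normsq (μ/2) z).differentiableAt)
  have hgk : ∀ z : E, gradient (fun lam : E => G lam - μ / 2 * ‖lam‖ ^ 2) z
      = gradient G z - μ • z := by
    intro z
    have h1 := ((hGd z).hasGradientAt.sub'' (grad_normsq (μ/2) z)).gradient
    rw [h1]
    congr 1
    rw [show 2 * (μ/2) = μ by ring]
  have h := mono_grad hG hkd u v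
  rw [hgk, hgk] at h
  have e : (gradient G u - μ • u) - (gradient G v - μ • v)
      = (gradient G u - gradient G v) - μ • (u - v) := by module
  rw [e, inner_sub_left, real_inner_smul_left, real_inner_self_eq_norm_sq] at h
  linarith

lemma descent {L : ℝ} {G : E → ℝ} (hGd : Differentiable ℝ G)
    (hGs : ∀ u v : E, ‖gradient G u - gradient G v‖ ≤ L * ‖u - v‖) (x y : E) :
    G y ≤ G x + ⟪gradient G x, y - x⟫ + L / 2 * ‖y - x‖ ^ 2 := by
  have hhd : Differentiable ℝ (fun z : E => L / 2 * ‖z‖ ^ 2 - G z) :=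
    Differentiable.sub (fun z => (grad_normsq (L/2) z).differentiableAt) hGd
  have hgh : ∀ z : E, gradient (fun z : E => L / 2 * ‖z‖ ^ 2 - G z) z = L • z - gradient G z := by
    intro z
    have h1 := ((grad_normsq (L/2) z).sub'' (hGd z).hasGradientAt).gradient
    rw [h1, show 2 * (L/2) = L by ring]
  have hconv : ConvexOn ℝ Set.univ (fun z : E => L / 2 * ‖z‖ ^ 2 - G z) := by
    apply convex_of_mono hhd
    intro u v
    rw [hgh, hgh]
    have e : (L • u - gradient G u) - (L • v - gradient G v)
        = L • (u - v) - (gradient G u - gradient G v) := by module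
    rw [e, inner_sub_left, real_inner_smul_left, real_inner_self_eq_norm_sq]
    have h1 : ⟪gradient G u - gradient G v, u - v⟫ ≤ L * ‖u - v‖ ^ 2 := by
      calc ⟪gradient G u - gradient G v, u - v⟫ ≤ ‖gradient G u - gradient G v‖ * ‖u - v‖ :=
            real_inner_le_norm _ _
        _ ≤ L * ‖u - v‖ * ‖u - v‖ := mul_le_mul_of_nonneg_right (hGs u v) (norm_nonneg _)
        _ = L * ‖u - v‖ ^ 2 := by ring
    linarith
  have h := grad_ineq hconv hhd x y
  rw [hgh] at h
  rw [inner_sub_left, real_inner_smul_left] at h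
  have hy : ‖y‖ ^ 2 = ‖x‖ ^ 2 + 2 * ⟪x, y - x⟫ + ‖y - x‖ ^ 2 := by
    have := norm_add_sq_real x (y - x)
    simpa using this
  have hy2 : L/2 * ‖y‖^2 = L/2 * ‖x‖^2 + L * ⟪x, y - x⟫ + L/2 * ‖y - x‖^2 := by
    rw [hy]; ring
  linarith [h, hy2]

lemma cocoercive {L : ℝ} {G : E → ℝ} (hL0 : 0 < L) (hGc : ConvexOn ℝ Set.univ G) (hGd : Differentiable ℝ G)
    (hGs : ∀ u v : E, ‖gradient G u - gradient G v‖ ≤ L * ‖u - v‖) (u v : E) :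
    ‖gradient G u - gradient G v‖ ^ 2 ≤ L * ⟪gradient G u - gradient G v, u - v⟫ := by
  have key : ∀ v x : E, G v + ⟪gradient G v, x - v⟫
      + 1 / (2 * L) * ‖gradient G x - gradient G v‖ ^ 2 ≤ G x := by
    intro v x
    set d := gradient G x - gradient G v with hd
    set y := x - (1/L) • d with hy
    have a1 : G v + ⟪gradient G v, y - v⟫ ≤ G y := grad_ineq hGc hGd v y
    have a2 : G y ≤ G x + ⟪gradient G x, y - x⟫ + L / 2 * ‖y - x‖ ^ 2 := descent hGd hGs x y
    have e1 : y - x = -((1/L) • d) := by rw [hy]; abel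
    have e2 : ⟪gradient G x, y - x⟫ = -(1/L) * ⟪gradient G x, d⟫ := by
      rw [e1, inner_neg_right, real_inner_smul_right]; ring
    have e3 : ‖y - x‖ ^ 2 = (1/L)^2 * ‖d‖ ^ 2 := by
      rw [e1, norm_neg, norm_smul, mul_pow, Real.norm_eq_abs,
        abs_of_pos (by positivity : (0:ℝ) < 1/L)]
    have e4 : ⟪gradient G v, y - v⟫ = ⟪gradient G v, x - v⟫ - (1/L) * ⟪gradient G v, d⟫ := by
      have : y - v = (x - v) - (1/L) • d := by rw [hy]; abel
      rw [this, inner_sub_right, real_inner_smul_right]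
    have e5 : ⟪gradient G x, d⟫ - ⟪gradient G v, d⟫ = ‖d‖ ^ 2 := by
      rw [← inner_sub_left, ← hd, real_inner_self_eq_norm_sq]
    have hL' : (0:ℝ) < 1/L := by positivity
    rw [e4] at a1
    rw [e2, e3] at a2
    have : G v + ⟪gradient G v, x - v⟫ + (1/L) * (⟪gradient G x, d⟫ - ⟪gradient G v, d⟫)
        - L/2 * ((1/L)^2 * ‖d‖^2) ≤ G x := by linarith
    rw [e5] at this
    have efin : (1/L) * ‖d‖^2 - L/2 * ((1/L)^2 * ‖d‖^2) = 1/(2*L) * ‖d‖^2 := by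
      field_simp; ring
    linarith
  have k1 := key v u
  have k2 := key u v
  have en : ‖gradient G v - gradient G u‖ = ‖gradient G u - gradient G v‖ := norm_sub_rev _ _
  rw [en] at k2
  have ei : ⟪gradient G u, v - u⟫ = -⟪gradient G u, u - v⟫ := by
    rw [show v - u = -(u - v) by abel, inner_neg_right]
  have es : ⟪gradient G u - gradient G v, u - v⟫
      = ⟪gradient G u, u - v⟫ - ⟪gradient G v, u - v⟫ := inner_sub_left _ _ _
  have hsum : 1/(2*L) * ‖gradient G u - gradient G v‖^2 + 1/(2*L) * ‖gradient G u - gradient G v‖^2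
      ≤ ⟪gradient G u - gradient G v, u - v⟫ := by rw [es]; linarith
  have hL' : L ≠ 0 := ne_of_gt hL0
  calc ‖gradient G u - gradient G v‖ ^ 2
      = L * (1/(2*L) * ‖gradient G u - gradient G v‖^2
        + 1/(2*L) * ‖gradient G u - gradient G v‖^2) := by field_simp; ring
    _ ≤ L * ⟪gradient G u - gradient G v, u - v⟫ :=
        mul_le_mul_of_nonneg_left hsum hL0.le

lemma grad_surj {μ L : ℝ} {G : E → ℝ} (hμ : 0 < μ) (hL : μ ≤ L)
    (hsm : ∀ u v : E, μ * ‖u - v‖ ^ 2 ≤ ⟪gradient G u - gradient G v, u - v⟫)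
    (hGs : ∀ u v : E, ‖gradient G u - gradient G v‖ ≤ L * ‖u - v‖) (w : E) :
    ∃ lam : E, gradient G lam = w := by
  have hL0 : (0:ℝ) < L := lt_of_lt_of_le hμ hL
  set t : ℝ := μ / L^2 with ht
  have ht0 : 0 < t := by positivity
  set Φ : E → E := fun lam => lam + t • (w - gradient G lam) with hΦ
  set c : ℝ := Real.sqrt (1 - μ^2 / L^2) with hc
  have harg0 : 0 ≤ 1 - μ^2 / L^2 := by
    have : μ^2 ≤ L^2 := by nlinarith
    have : μ^2 / L^2 ≤ 1 := by
      rw [div_le_one (by positivity)]; exact this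
    linarith
  have hc0 : 0 ≤ c := Real.sqrt_nonneg _
  have hc1 : c < 1 := by
    have harg1 : 1 - μ^2 / L^2 < 1 := by
      have : 0 < μ^2 / L^2 := by positivity
      linarith
    calc c < Real.sqrt 1 := Real.sqrt_lt_sqrt harg0 harg1
      _ = 1 := Real.sqrt_one
  have hlip : ∀ a b : E, dist (Φ a) (Φ b) ≤ c * dist a b := by
    intro a b
    rw [dist_eq_norm, dist_eq_norm]
    have e1 : Φ a - Φ b = (a - b) - t • (gradient G a - gradient G b) := by
      simp only [hΦ]; module
    have e2 : ‖Φ a - Φ b‖^2 = ‖a - b‖^2 - 2 * t * ⟪gradient G a - gradient G b, a - b⟫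
        + t^2 * ‖gradient G a - gradient G b‖^2 := by
      rw [e1]
      rw [norm_sub_sq_real, norm_smul, real_inner_smul_right, Real.norm_eq_abs,
        abs_of_pos ht0, real_inner_comm]
      ring
    have hb1 : μ * ‖a - b‖^2 ≤ ⟪gradient G a - gradient G b, a - b⟫ := hsm a b
    have hb2 : ‖gradient G a - gradient G b‖^2 ≤ L^2 * ‖a - b‖^2 := by
      have := hGs a b
      nlinarith [norm_nonneg (gradient G a - gradient G b), norm_nonneg (a - b)]
    have e3 : ‖Φ a - Φ b‖^2 ≤ (1 - μ^2/L^2) * ‖a - b‖^2 := by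
      rw [e2]
      have h1 : t^2 * ‖gradient G a - gradient G b‖^2 ≤ t^2 * (L^2 * ‖a - b‖^2) :=
        mul_le_mul_of_nonneg_left hb2 (sq_nonneg t)
      have h2 : 2 * t * (μ * ‖a - b‖^2) ≤ 2 * t * ⟪gradient G a - gradient G b, a - b⟫ :=
        mul_le_mul_of_nonneg_left hb1 (by positivity)
      have heq : ‖a - b‖^2 - 2 * t * (μ * ‖a - b‖^2) + t^2 * (L^2 * ‖a - b‖^2)
          = (1 - μ^2/L^2) * ‖a - b‖^2 := by
        rw [ht]; field_simp; ring
      linarith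
    calc ‖Φ a - Φ b‖ = Real.sqrt (‖Φ a - Φ b‖^2) := (Real.sqrt_sq (norm_nonneg _)).symm
      _ ≤ Real.sqrt ((1 - μ^2/L^2) * ‖a - b‖^2) := Real.sqrt_le_sqrt e3
      _ = c * ‖a - b‖ := by
          rw [Real.sqrt_mul harg0, Real.sqrt_sq (norm_nonneg _)]
  have hcontr : ContractingWith ⟨c, hc0⟩ Φ := by
    constructor
    · exact_mod_cast hc1
    · exact LipschitzWith.of_dist_le_mul hlip
  have hfix := hcontr.fixedPoint_isFixedPt (f := Φ)
  set p := hcontr.fixedPoint Φ with hp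
  refine ⟨p, ?_⟩
  have : p + t • (w - gradient G p) = p := hfix
  have h0 : t • (w - gradient G p) = 0 := by
    have := congrArg (fun z => z - p) this
    simpa using this
  rcases smul_eq_zero.mp h0 with h | h
  · exact absurd h (ne_of_gt ht0)
  · have : w - gradient G p = 0 := h
    have := sub_eq_zero.mp this
    exact this.symm

lemma spec_bound (S : Matrix (Fin m) (Fin m) ℝ) (hH : S.IsHermitian)
    (w : E) (hw : w ∈ LinearMap.range (Matrix.toEuclideanLin S)) :
    posMinEig (S * S) * ‖w‖ ^ 2 ≤ ‖Matrix.toEuclideanLin S w‖ ^ 2 := by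
  set T := Matrix.toEuclideanLin S with hT
  have hTsym : T.IsSymmetric := Matrix.isHermitian_iff_isSymmetric.mp hH
  have hmul : ∀ v : E, Matrix.toEuclideanLin (S * S) v = T (T v) := by
    intro v
    simp [hT, Matrix.toEuclideanLin_apply, Matrix.mulVec_mulVec]
  have hAsym : (Matrix.toEuclideanLin (S * S)).IsSymmetric := by
    intro x y
    rw [hmul, hmul, hTsym (T x) y, hTsym x (T y)]
  have hn : Module.finrank ℝ (EuclideanSpace ℝ (Fin m)) = m := finrank_euclideanSpace_fin
  set b := hAsym.eigenvectorBasis hn with hb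
  set eig := hAsym.eigenvalues hn with heig
  have happly : ∀ i, Matrix.toEuclideanLin (S * S) (b i) = eig i • b i := by
    intro i; exact_mod_cast hAsym.apply_eigenvectorBasis hn i
  have hbnorm : ∀ i, ‖b i‖ = 1 := fun i => b.orthonormal.1 i
  have hbne : ∀ i, b i ≠ 0 := fun i => by
    intro h; have := hbnorm i; rw [h] at this; simp at this
  -- eigenvalue formula: eig i = ‖T (b i)‖ ^ 2
  have heig_eq : ∀ i, eig i = ‖T (b i)‖ ^ 2 := by
    intro i
    have h1 : ⟪b i, Matrix.toEuclideanLin (S * S) (b i)⟫ = eig i := by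
      rw [happly, real_inner_smul_right, real_inner_self_eq_norm_sq, hbnorm]
      ring
    rw [← h1, hmul, ← hTsym (b i) (T (b i)), real_inner_self_eq_norm_sq]
  -- components
  set c : Fin m → ℝ := fun i => b.repr w i with hc
  have hcform : ∀ i, c i = ⟪b i, w⟫ := fun i => b.repr_apply_apply w i
  have hczero : ∀ i, eig i = 0 → c i = 0 := by
    intro i hei
    have hTbi : T (b i) = 0 := by
      have := heig_eq i
      rw [hei] at this
      have : ‖T (b i)‖ = 0 := by nlinarith [norm_nonneg (T (b i))]
      exact norm_eq_zero.mp this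
    obtain ⟨u, hu⟩ := hw
    rw [hcform, ← hu, ← hTsym (b i) u, hTbi]
    simp
  have heig_nonneg : ∀ i, 0 ≤ eig i := fun i => by rw [heig_eq]; positivity
  -- posMinEig ≤ eig i when eig i > 0
  have hlb : ∀ i, 0 < eig i → posMinEig (S * S) ≤ eig i := by
    intro i hpos
    apply csInf_le ⟨0, fun t ht => le_of_lt ht.1⟩
    exact ⟨hpos, b i, hbne i, happly i⟩
  -- Parseval
  have hnorm : ‖w‖ ^ 2 = ∑ i, c i ^ 2 := by
    have h1 : ‖w‖ ^ 2 = ⟪w, w⟫ := (real_inner_self_eq_norm_sq w).symm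
    have h2 : ⟪w, w⟫ = ⟪b.repr w, b.repr w⟫ := (b.repr.inner_map_map w w).symm
    rw [h1, h2, PiLp.inner_apply]
    apply Finset.sum_congr rfl
    intro i _
    simp [hc, sq]
  -- quadratic form
  have hrepr : ∀ i, b.repr (Matrix.toEuclideanLin (S * S) w) i = eig i * c i := by
    intro i
    rw [b.repr_apply_apply, ← hAsym (b i) w, happly, real_inner_smul_left, ← hcform]
  have hquad : ‖T w‖ ^ 2 = ∑ i, eig i * c i ^ 2 := by
    have h1 : ‖T w‖ ^ 2 = ⟪w, Matrix.toEuclideanLin (S * S) w⟫ := by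
      rw [hmul, ← hTsym w (T w), real_inner_self_eq_norm_sq]
    rw [h1, ← b.repr.inner_map_map w (Matrix.toEuclideanLin (S * S) w), PiLp.inner_apply]
    apply Finset.sum_congr rfl
    intro i _
    have hr := hrepr i
    simp [hc] at hr
    simp [hc, sq, hr]
    ring
  rw [hnorm, hquad, Finset.mul_sum]
  apply Finset.sum_le_sum
  intro i _
  rcases eq_or_lt_of_le (heig_nonneg i) with hz | hp
  · rw [hczero i hz.symm]; simp
  · exact mul_le_mul_of_nonneg_right (hlb i hp) (sq_nonneg _)

end Aux

set_option maxHeartbeats 1000000 in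
set_option synthInstance.maxHeartbeats 200000 in
/-- Let `G : ℝ^m → ℝ` be `μ`-strongly convex (`μ > 0`) and `L`-smooth (`L ≥ μ`), and let
`S` be a symmetric positive semidefinite `m × m` matrix.  Then
`F(y) = sup_λ (−G(λ) − ⟪y, S λ⟫)` is `(λmax(S)²/μ)`-smooth, and `F` is
`(λ⁺min(S²)/L)`-strongly convex on `Range(S)`: for all `y, y' ∈ Range(S)`,
`⟪∇F(y) − ∇F(y'), y − y'⟫ ≥ (λ⁺min(S²)/L) ‖y − y'‖²`. -/
theorem stmt5 {m : ℕ} (μ L : ℝ) (hμ : 0 < μ) (hL : μ ≤ L)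
    (G : EuclideanSpace ℝ (Fin m) → ℝ)
    (hG : ConvexOn ℝ Set.univ (fun lam => G lam - μ / 2 * ‖lam‖ ^ 2))
    (hGd : Differentiable ℝ G)
    (hGs : ∀ u v : EuclideanSpace ℝ (Fin m), ‖gradient G u - gradient G v‖ ≤ L * ‖u - v‖)
    (S : Matrix (Fin m) (Fin m) ℝ) (hSsymm : S.IsSymm) (hSpsd : S.PosSemidef)
    (F : EuclideanSpace ℝ (Fin m) → ℝ)
    (hF : ∀ y, F y = ⨆ lam : EuclideanSpace ℝ (Fin m),
      (-G lam - ⟪y, Matrix.toEuclideanLin S lam⟫)) :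
    Differentiable ℝ F ∧
    (∀ y y' : EuclideanSpace ℝ (Fin m),
        ‖gradient F y - gradient F y'‖ ≤ lambdaMax S ^ 2 / μ * ‖y - y'‖) ∧
    (∀ y ∈ LinearMap.range (Matrix.toEuclideanLin S),
      ∀ y' ∈ LinearMap.range (Matrix.toEuclideanLin S),
        posMinEig (S * S) / L * ‖y - y'‖ ^ 2
          ≤ ⟪gradient F y - gradient F y', y - y'⟫) := by
  have hL0 : (0:ℝ) < L := lt_of_lt_of_le hμ hL
  set T := Matrix.toEuclideanLin S with hT
  have hTsym : T.IsSymmetric := Matrix.isHermitian_iff_isSymmetric.mp hSpsd.1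
  have hsm := strong_mono hG hGd
  have hGconv : ConvexOn ℝ Set.univ G := convex_of_mono hGd (fun u v => by
    have := hsm u v
    nlinarith [sq_nonneg ‖u - v‖, mul_nonneg hμ.le (sq_nonneg ‖u - v‖)])
  have hcoco := cocoercive hL0 hGconv hGd hGs
  -- the maximizer
  have hsurj := grad_surj hμ hL hsm hGs
  set lam : EuclideanSpace ℝ (Fin m) → EuclideanSpace ℝ (Fin m) :=
    fun y => Classical.choose (hsurj (-(T y))) with hlamdef
  have hlam : ∀ y, gradient G (lam y) = -(T y) :=
    fun y => Classical.choose_spec (hsurj (-(T y)))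
  set g : EuclideanSpace ℝ (Fin m) → EuclideanSpace ℝ (Fin m) :=
    fun y => -(T (lam y)) with hgdef
  -- inner product rewriting
  have hswap : ∀ (y z : EuclideanSpace ℝ (Fin m)), ⟪y, T z⟫ = ⟪T y, z⟫ :=
    fun y z => (hTsym y z).symm
  -- upper bound of the sup
  have hub : ∀ y z : EuclideanSpace ℝ (Fin m),
      -G z - ⟪y, T z⟫ ≤ -G (lam y) - ⟪y, T (lam y)⟫ := by
    intro y z
    have h1 := grad_ineq hGconv hGd (lam y) z
    rw [hlam y] at h1
    rw [hswap y z, hswap y (lam y)]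
    have h2 : ⟪-(T y), z - lam y⟫ = -⟪T y, z⟫ + ⟪T y, lam y⟫ := by
      rw [inner_neg_left, inner_sub_right]; ring
    rw [h2] at h1
    linarith
  have hbdd : ∀ y : EuclideanSpace ℝ (Fin m),
      BddAbove (Set.range (fun z => -G z - ⟪y, T z⟫)) :=
    fun y => ⟨-G (lam y) - ⟪y, T (lam y)⟫, by rintro _ ⟨z, rfl⟩; exact hub y z⟩
  have hFeq : ∀ y, F y = -G (lam y) - ⟪y, T (lam y)⟫ := by
    intro y
    rw [hF y]
    exact le_antisymm (ciSup_le (hub y)) (le_ciSup (hbdd y) (lam y))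
  -- key lower bound
  have hlower : ∀ y y' : EuclideanSpace ℝ (Fin m), F y + ⟪g y, y' - y⟫ ≤ F y' := by
    intro y y'
    have h1 : F y' = ⨆ z, (-G z - ⟪y', T z⟫) := hF y'
    have h2 : -G (lam y) - ⟪y', T (lam y)⟫ ≤ F y' := by
      rw [h1]; exact le_ciSup (hbdd y') (lam y)
    have h3 : ⟪g y, y' - y⟫ = -⟪y', T (lam y)⟫ + ⟪y, T (lam y)⟫ := by
      rw [hgdef]
      simp only [inner_neg_left, inner_sub_right]
      rw [real_inner_comm (T (lam y)) y', real_inner_comm (T (lam y)) y]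
      ring
    rw [hFeq y, h3]
    linarith
  -- Lipschitz of lam
  have hlamlip : ∀ y y' : EuclideanSpace ℝ (Fin m),
      μ * ‖lam y - lam y'‖ ≤ ‖T (y' - y)‖ := by
    intro y y'
    rcases eq_or_ne (lam y - lam y') 0 with hz | hz
    · rw [hz]; simp
    have h1 := hsm (lam y) (lam y')
    rw [hlam y, hlam y'] at h1
    have h2 : -(T y) - -(T y') = T (y' - y) := by rw [map_sub]; abel
    rw [h2] at h1
    have h3 : ⟪T (y' - y), lam y - lam y'⟫ ≤ ‖T (y' - y)‖ * ‖lam y - lam y'‖ :=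
      real_inner_le_norm _ _
    have h4 : 0 < ‖lam y - lam y'‖ := norm_pos_iff.mpr hz
    nlinarith
  -- operator norm bound
  have hop : ∀ v : EuclideanSpace ℝ (Fin m), ‖T v‖ ≤ lambdaMax S * ‖v‖ := by
    intro v
    have := (LinearMap.toContinuousLinearMap T).le_opNorm v
    simpa [lambdaMax, hT] using this
  have hlmax0 : 0 ≤ lambdaMax S := norm_nonneg _
  -- Lipschitz of g
  have hglip : ∀ y y' : EuclideanSpace ℝ (Fin m),
      ‖g y - g y'‖ ≤ lambdaMax S ^ 2 / μ * ‖y - y'‖ := by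
    intro y y'
    have e1 : g y - g y' = T (lam y' - lam y) := by
      rw [hgdef]; simp only [map_sub]; abel
    rw [e1]
    have h1 : ‖T (lam y' - lam y)‖ ≤ lambdaMax S * ‖lam y' - lam y‖ := hop _
    have h2 : μ * ‖lam y' - lam y‖ ≤ ‖T (y - y')‖ := hlamlip y' y
    have h3 : ‖T (y - y')‖ ≤ lambdaMax S * ‖y - y'‖ := hop _
    have h4 : ‖lam y' - lam y‖ ≤ lambdaMax S / μ * ‖y - y'‖ := by
      rw [div_mul_eq_mul_div, le_div_iff₀ hμ]
      nlinarith
    calc ‖T (lam y' - lam y)‖ ≤ lambdaMax S * ‖lam y' - lam y‖ := h1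
      _ ≤ lambdaMax S * (lambdaMax S / μ * ‖y - y'‖) :=
          mul_le_mul_of_nonneg_left h4 hlmax0
      _ = lambdaMax S ^ 2 / μ * ‖y - y'‖ := by ring
  -- gradient of F
  have hgrad : ∀ y, HasGradientAt F (g y) y := by
    intro y
    apply hasGradientAt_of_quad (K := lambdaMax S ^ 2 / μ)
    intro y'
    have h1 : 0 ≤ F y' - F y - ⟪g y, y' - y⟫ := by linarith [hlower y y']
    have h2 : F y' - F y ≤ ⟪g y', y' - y⟫ := by
      have := hlower y' y
      have e : ⟪g y', y - y'⟫ = -⟪g y', y' - y⟫ := by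
        rw [show y - y' = -(y' - y) by abel, inner_neg_right]
      rw [e] at this
      linarith
    have h3 : F y' - F y - ⟪g y, y' - y⟫ ≤ ⟪g y' - g y, y' - y⟫ := by
      rw [inner_sub_left]; linarith
    have h4 : ⟪g y' - g y, y' - y⟫ ≤ lambdaMax S ^ 2 / μ * ‖y' - y‖ ^ 2 := by
      calc ⟪g y' - g y, y' - y⟫ ≤ ‖g y' - g y‖ * ‖y' - y‖ := real_inner_le_norm _ _
        _ ≤ (lambdaMax S ^ 2 / μ * ‖y' - y‖) * ‖y' - y‖ :=
            mul_le_mul_of_nonneg_right (hglip y' y) (norm_nonneg _)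
        _ = lambdaMax S ^ 2 / μ * ‖y' - y‖ ^ 2 := by ring
    rw [abs_le]
    constructor
    · have : (0:ℝ) ≤ lambdaMax S ^ 2 / μ * ‖y' - y‖ ^ 2 := by positivity
      linarith
    · linarith
  have hgradeq : ∀ y, gradient F y = g y := fun y => (hgrad y).gradient
  refine ⟨fun y => (hgrad y).differentiableAt, ?_, ?_⟩
  · intro y y'
    rw [hgradeq, hgradeq]
    exact hglip y y'
  · intro y hy y' hy'
    rw [hgradeq, hgradeq]
    have hw : y - y' ∈ LinearMap.range T := Submodule.sub_mem _ hy hy'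
    have e1 : g y - g y' = T (lam y' - lam y) := by
      rw [hgdef]; simp only [map_sub]; abel
    have e2 : ⟪g y - g y', y - y'⟫ = ⟪lam y' - lam y, T (y - y')⟫ := by
      rw [e1]; exact hTsym _ _
    have e3 : T (y - y') = gradient G (lam y') - gradient G (lam y) := by
      rw [hlam, hlam, map_sub]; abel
    have hc := hcoco (lam y') (lam y)
    have e4 : ⟪lam y' - lam y, T (y - y')⟫
        = ⟪gradient G (lam y') - gradient G (lam y), lam y' - lam y⟫ := by
      rw [e3, real_inner_comm]
    have e5 : ‖gradient G (lam y') - gradient G (lam y)‖ ^ 2 = ‖T (y - y')‖ ^ 2 := by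
      rw [e3]
    have hspec := spec_bound S hSpsd.1 (y - y') hw
    rw [e2, e4]
    have h6 : ‖T (y - y')‖ ^ 2
        ≤ L * ⟪gradient G (lam y') - gradient G (lam y), lam y' - lam y⟫ := by
      rw [← e5]; exact hc
    rw [div_mul_eq_mul_div, div_le_iff₀ hL0]
    nlinarith
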